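/- For every m ≥ 1, the polynomials D_m satisfy the recurrence D_m(q) = D_{m−1}(q) + q^{m−1} · Σ_{h=0}^{m−2} D_h(q) (the sum being empty when m = 1), with D₀(q) = D₁(q) = 1. -/
import Mathlib

open Multiset


-- assume previous lemmas available; re-import by axiom for speed? No, just concat later.
lemma msup_mem {s : Multiset ℕ} (hs : s ≠ 0) : s.sup ∈ s := by
  induction s using Multiset.induction with
  | empty => simp at hs
  | cons a s ih =>
    rcases eq_or_ne s 0 with rfl | h
    · simp
    · rw [Multiset.sup_cons]
      rcases le_total a s.sup with h1 | h1
      · rw [sup_eq_right.2 h1]; exact Multiset.mem_cons_of_mem (ih h)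
      · rw [sup_eq_left.2 h1]; exact Multiset.mem_cons_self _ _

lemma msum_map_pred {u : Multiset ℕ} (hu : ∀ x ∈ u, 0 < x) :
    u.sum = (u.map (· - 1)).sum + Multiset.card u := by
  induction u using Multiset.induction with
  | empty => simp
  | cons a u ih =>
    have ha : 0 < a := hu a (Multiset.mem_cons_self _ _)
    have := ih (fun x hx => hu x (Multiset.mem_cons_of_mem hx))
    simp only [Multiset.sum_cons, Multiset.map_cons, Multiset.card_cons]
    omega

lemma mdecomp {u : Multiset ℕ} (hu : ∀ x ∈ u, 0 < x) :
    u = ((u.map (· - 1)).filter (0 < ·)).map (· + 1)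
        + Multiset.replicate (Multiset.card u -
            Multiset.card ((u.map (· - 1)).filter (0 < ·))) 1 := by
  induction u using Multiset.induction with
  | empty => simp
  | cons a u ih =>
    have ha : 0 < a := hu a (Multiset.mem_cons_self _ _)
    have ih' := ih (fun x hx => hu x (Multiset.mem_cons_of_mem hx))
    have hcle : Multiset.card ((u.map (· - 1)).filter (0 < ·)) ≤ Multiset.card u := by
      calc Multiset.card ((u.map (· - 1)).filter (0 < ·))
          ≤ Multiset.card (u.map (· - 1)) := Multiset.card_le_card (Multiset.filter_le _ _)
        _ = Multiset.card u := Multiset.card_map _ _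
    rcases Nat.lt_or_ge 1 a with h2 | h2
    · rw [Multiset.map_cons, Multiset.filter_cons_of_pos _ (by omega : 0 < a - 1),
        Multiset.map_cons, Multiset.card_cons, Multiset.card_cons]
      have : a - 1 + 1 = a := by omega
      rw [this, Multiset.cons_add]
      congr 1
      rw [Nat.succ_sub_succ]
      exact ih'
    · have h1 : a = 1 := by omega
      subst h1
      rw [Multiset.map_cons, Multiset.filter_cons_of_neg _ (by simp), Multiset.card_cons]
      have : Multiset.card u + 1 - Multiset.card ((u.map (· - 1)).filter (0 < ·))
          = (Multiset.card u - Multiset.card ((u.map (· - 1)).filter (0 < ·))) + 1 := by omega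
      rw [this, Multiset.replicate_succ]
      conv_lhs => rw [ih']
      rw [Multiset.add_cons]

lemma msum_map_succ (t : Multiset ℕ) :
    (t.map (· + 1)).sum = t.sum + Multiset.card t := by
  induction t using Multiset.induction with
  | empty => simp
  | cons a t ih => simp only [Multiset.sum_cons, Multiset.map_cons, Multiset.card_cons]; omega

/-- hook removal -/
def hookT (s : Multiset ℕ) : Multiset ℕ := ((s.erase s.sup).map (· - 1)).filter (0 < ·)

lemma L1 {s : Multiset ℕ} (hpos : ∀ x ∈ s, 0 < x) (hs : s ≠ 0) :
    (hookT s).sum + s.sup + Multiset.card s = s.sum + 1 ∧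
    (∀ x ∈ hookT s, 0 < x) ∧
    (hookT s).sup + 1 ≤ s.sup ∧
    Multiset.card (hookT s) + 1 ≤ Multiset.card s ∧
    s = (s.sup ::ₘ (hookT s).map (· + 1))
        + Multiset.replicate (Multiset.card s - 1 - Multiset.card (hookT s)) 1 := by
  set a := s.sup with hadef
  have hmem : a ∈ s := msup_mem hs
  have hcons : a ::ₘ s.erase a = s := Multiset.cons_erase hmem
  set u := s.erase a with hudef
  have hupos : ∀ x ∈ u, 0 < x := fun x hx => hpos x (Multiset.mem_of_mem_erase hx)
  have hsumu : a + u.sum = s.sum := by rw [← hcons, Multiset.sum_cons]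
  have hcardu : Multiset.card u + 1 = Multiset.card s := by
    rw [← hcons, Multiset.card_cons]
  have htfil : hookT s + (u.map (· - 1)).filter (fun x => ¬ 0 < x) = u.map (· - 1) := by
    exact Multiset.filter_add_not _ _
  have hcardt : Multiset.card (hookT s) ≤ Multiset.card u := by
    calc Multiset.card (hookT s) ≤ Multiset.card (u.map (· - 1)) :=
          Multiset.card_le_card (Multiset.filter_le _ _)
      _ = Multiset.card u := Multiset.card_map _ _
  have hsumfil : ((u.map (· - 1)).filter (fun x => ¬ 0 < x)).sum = 0 := by
    apply Multiset.sum_eq_zero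
    intro x hx
    have := Multiset.of_mem_filter hx
    omega
  have hsumt : (hookT s).sum = (u.map (· - 1)).sum := by
    have := congrArg Multiset.sum htfil
    rw [Multiset.sum_add, hsumfil] at this
    simpa using this
  have hsumu' : u.sum = (u.map (· - 1)).sum + Multiset.card u := msum_map_pred hupos
  have ha1 : 1 ≤ a := hpos a hmem
  refine ⟨by omega, ?_, ?_, by omega, ?_⟩
  · exact fun x hx => Multiset.of_mem_filter hx
  · have : ∀ x ∈ hookT s, x ≤ a - 1 := by
      intro x hx
      have hx0 : 0 < x := Multiset.of_mem_filter hx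
      have hx1 := Multiset.mem_of_mem_filter hx
      obtain ⟨y, hy, rfl⟩ := Multiset.mem_map.1 hx1
      have : y ≤ a := Multiset.le_sup (Multiset.mem_of_mem_erase hy)
      omega
    have := Multiset.sup_le.2 this
    omega
  · conv_lhs => rw [← hcons]
    rw [Multiset.cons_add]
    congr 1
    have : Multiset.card s - 1 - Multiset.card (hookT s)
        = Multiset.card u - Multiset.card (hookT s) := by omega
    rw [this]
    exact mdecomp hupos

lemma L2 {t : Multiset ℕ} (a k : ℕ) (hpos : ∀ x ∈ t, 0 < x) (ha : t.sup < a) (ha1 : 0 < a) :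
    (∀ x ∈ (a ::ₘ t.map (· + 1)) + Multiset.replicate k 1, 0 < x) ∧
    ((a ::ₘ t.map (· + 1)) + Multiset.replicate k 1).sum = a + t.sum + Multiset.card t + k ∧
    Multiset.card ((a ::ₘ t.map (· + 1)) + Multiset.replicate k 1) = 1 + Multiset.card t + k ∧
    ((a ::ₘ t.map (· + 1)) + Multiset.replicate k 1).sup = a ∧
    hookT ((a ::ₘ t.map (· + 1)) + Multiset.replicate k 1) = t := by
  set s := (a ::ₘ t.map (· + 1)) + Multiset.replicate k 1 with hsdef
  have hmem : ∀ x ∈ s, x = a ∨ (∃ y ∈ t, x = y + 1) ∨ x = 1 := by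
    intro x hx
    rw [hsdef] at hx
    rcases Multiset.mem_add.1 hx with hx | hx
    · rcases Multiset.mem_cons.1 hx with hx | hx
      · exact Or.inl hx
      · obtain ⟨y, hy, rfl⟩ := Multiset.mem_map.1 hx
        exact Or.inr (Or.inl ⟨y, hy, rfl⟩)
    · exact Or.inr (Or.inr (Multiset.eq_of_mem_replicate hx))
  have hsup : s.sup = a := by
    apply le_antisymm
    · apply Multiset.sup_le.2
      intro b hb
      rcases hmem b hb with rfl | ⟨y, hy, rfl⟩ | rfl
      · exact le_rfl
      · have : y ≤ t.sup := Multiset.le_sup hy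
        omega
      · omega
    · exact Multiset.le_sup (by rw [hsdef]; exact Multiset.mem_add.2 (Or.inl (Multiset.mem_cons_self _ _)))
  have hsum : s.sum = a + t.sum + Multiset.card t + k := by
    rw [hsdef, Multiset.sum_add, Multiset.sum_cons, Multiset.sum_replicate, smul_eq_mul, mul_one]
    have : (t.map (· + 1)).sum = t.sum + Multiset.card t := msum_map_succ t
    omega
  have hcard : Multiset.card s = 1 + Multiset.card t + k := by
    rw [hsdef]
    simp [Multiset.card_add, Multiset.card_cons, Multiset.card_map, Multiset.card_replicate]
    omega
  refine ⟨?_, hsum, hcard, hsup, ?_⟩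
  · intro x hx
    rcases hmem x hx with rfl | ⟨y, hy, rfl⟩ | rfl <;> omega
  · rw [hookT, hsup]
    have herase : s.erase a = t.map (· + 1) + Multiset.replicate k 1 := by
      rw [hsdef, Multiset.cons_add, Multiset.erase_cons_head]
    rw [herase, Multiset.map_add, Multiset.filter_add]
    have h1 : ((t.map (· + 1)).map (· - 1)).filter (0 < ·) = t := by
      rw [Multiset.map_map]
      have : t.map ((· - 1) ∘ (· + 1)) = t := by
        rw [show ((· - 1) ∘ (· + 1) : ℕ → ℕ) = id from funext (fun x => by simp), Multiset.map_id]
      rw [this]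
      rw [Multiset.filter_eq_self]
      exact hpos
    have h2 : ((Multiset.replicate k 1).map (· - 1)).filter (0 < ·) = 0 := by
      rw [Multiset.map_replicate]
      refine Multiset.filter_eq_nil.2 (fun x hx => ?_)
      have := Multiset.eq_of_mem_replicate hx
      omega
    rw [h1, h2, add_zero]

lemma sup_card_cases (t : Multiset ℕ) (hpos : ∀ x ∈ t, 0 < x) :
    t = 0 ∨ (1 ≤ t.sup ∧ 1 ≤ Multiset.card t) := by
  rcases eq_or_ne t 0 with rfl | h
  · exact Or.inl rfl
  · right
    obtain ⟨x, hx⟩ := Multiset.exists_mem_of_ne_zero h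
    exact ⟨le_trans (hpos x hx) (Multiset.le_sup hx), by
      have := Multiset.card_pos.2 h; omega⟩

lemma sigma_subtype_ext {k : ℕ} {α : Type*} {P : Fin k → α → Prop}
    (a b : Σ h : Fin k, {x : α // P h x}) (h1 : (a.1 : ℕ) = (b.1 : ℕ))
    (h2 : (a.2 : α) = (b.2 : α)) : a = b := by
  obtain ⟨⟨i, hi⟩, ⟨x, hx⟩⟩ := a
  obtain ⟨⟨j, hj⟩, ⟨y, hy⟩⟩ := b
  dsimp at h1 h2
  subst h1
  subst h2
  rfl

lemma F1 {m n : ℕ} (hm : 2 ≤ m) (p : Nat.Partition (n + (m - 1)))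
    (hp : p.parts.sup + Multiset.card p.parts = m) :
    (∀ x ∈ hookT p.parts, 0 < x) ∧
    (hookT p.parts).sum = n ∧
    (hookT p.parts).sup + Multiset.card (hookT p.parts)
      ≤ p.parts.sup - 1 + Multiset.card (hookT p.parts) ∧
    p.parts.sup - 1 + Multiset.card (hookT p.parts) < m - 1 ∧
    ((p.parts.sup - 1 + Multiset.card (hookT p.parts) + 1 - Multiset.card (hookT p.parts))
        ::ₘ (hookT p.parts).map (· + 1))
      + Multiset.replicate (m - (p.parts.sup - 1 + Multiset.card (hookT p.parts)) - 2) 1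
      = p.parts := by
  have hpos : ∀ x ∈ p.parts, 0 < x := fun x hx => p.parts_pos hx
  have hne : p.parts ≠ 0 := by
    intro h0
    rw [h0] at hp
    simp at hp
    omega
  have hsum : p.parts.sum = n + (m - 1) := p.parts_sum
  have hsle : 1 ≤ p.parts.sup := by
    obtain ⟨x, hx⟩ := Multiset.exists_mem_of_ne_zero hne
    exact le_trans (hpos x hx) (Multiset.le_sup hx)
  obtain ⟨f1, f2, f3, f4, f5⟩ := L1 hpos hne
  refine ⟨f2, by omega, by omega, by omega, ?_⟩
  have e1 : p.parts.sup - 1 + Multiset.card (hookT p.parts) + 1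
      - Multiset.card (hookT p.parts) = p.parts.sup := by omega
  have e2 : m - (p.parts.sup - 1 + Multiset.card (hookT p.parts)) - 2
      = Multiset.card p.parts - 1 - Multiset.card (hookT p.parts) := by omega
  rw [e1, e2]
  exact f5.symm

lemma F2 {m n : ℕ} (hm : 2 ≤ m) (h : ℕ) (hh : h < m - 1) (q : Nat.Partition n)
    (hq : q.parts.sup + Multiset.card q.parts ≤ h) :
    (∀ x ∈ ((h + 1 - Multiset.card q.parts) ::ₘ q.parts.map (· + 1))
        + Multiset.replicate (m - h - 2) 1, 0 < x) ∧
    (((h + 1 - Multiset.card q.parts) ::ₘ q.parts.map (· + 1))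
        + Multiset.replicate (m - h - 2) 1).sum = n + (m - 1) ∧
    (((h + 1 - Multiset.card q.parts) ::ₘ q.parts.map (· + 1))
        + Multiset.replicate (m - h - 2) 1).sup
      + Multiset.card (((h + 1 - Multiset.card q.parts) ::ₘ q.parts.map (· + 1))
        + Multiset.replicate (m - h - 2) 1) = m ∧
    hookT (((h + 1 - Multiset.card q.parts) ::ₘ q.parts.map (· + 1))
        + Multiset.replicate (m - h - 2) 1) = q.parts ∧
    (((h + 1 - Multiset.card q.parts) ::ₘ q.parts.map (· + 1))
        + Multiset.replicate (m - h - 2) 1).sup - 1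
      + Multiset.card (hookT (((h + 1 - Multiset.card q.parts) ::ₘ q.parts.map (· + 1))
        + Multiset.replicate (m - h - 2) 1)) = h := by
  have hpos : ∀ x ∈ q.parts, 0 < x := fun x hx => q.parts_pos hx
  have hsum : q.parts.sum = n := q.parts_sum
  have hct : Multiset.card q.parts ≤ h := by
    rcases sup_card_cases q.parts hpos with h0 | h0
    · rw [h0]; simp
    · omega
  have hsup : q.parts.sup < h + 1 - Multiset.card q.parts := by omega
  obtain ⟨g1, g2, g3, g4, g5⟩ :=
    L2 (h + 1 - Multiset.card q.parts) (m - h - 2) hpos hsup (by omega)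
  exact ⟨g1, by rw [g2]; omega, by rw [g3, g4]; omega, g5, by rw [g4, g5]; omega⟩

noncomputable def myEquiv (m n : ℕ) (hm : 2 ≤ m) :
    {p : Nat.Partition (n + (m - 1)) // p.parts.sup + Multiset.card p.parts = m}
      ≃ Σ h : Fin (m - 1), {q : Nat.Partition n //
          q.parts.sup + Multiset.card q.parts ≤ (h : ℕ)} where
  toFun p :=
    ⟨⟨p.1.parts.sup - 1 + Multiset.card (hookT p.1.parts), (F1 hm p.1 p.2).2.2.2.1⟩,
      ⟨⟨hookT p.1.parts, fun {x} hx => (F1 hm p.1 p.2).1 x hx, (F1 hm p.1 p.2).2.1⟩,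
        (F1 hm p.1 p.2).2.2.1⟩⟩
  invFun b :=
    ⟨⟨(((b.1 : ℕ) + 1 - Multiset.card b.2.1.parts) ::ₘ b.2.1.parts.map (· + 1))
        + Multiset.replicate (m - (b.1 : ℕ) - 2) 1,
      fun {x} hx => (F2 hm b.1 b.1.2 b.2.1 b.2.2).1 x hx,
      (F2 hm b.1 b.1.2 b.2.1 b.2.2).2.1⟩,
      (F2 hm b.1 b.1.2 b.2.1 b.2.2).2.2.1⟩
  left_inv p := by
    apply Subtype.ext
    apply Nat.Partition.ext
    exact (F1 hm p.1 p.2).2.2.2.2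
  right_inv b := by
    apply sigma_subtype_ext
    · exact (F2 hm b.1 b.1.2 b.2.1 b.2.2).2.2.2.2
    · show (⟨hookT _, _, _⟩ : Nat.Partition n) = b.2.1
      apply Nat.Partition.ext
      exact (F2 hm b.1 b.1.2 b.2.1 b.2.2).2.2.2.1

lemma mcard_le_sum {u : Multiset ℕ} (hu : ∀ x ∈ u, 0 < x) :
    Multiset.card u ≤ u.sum := by
  induction u using Multiset.induction with
  | empty => simp
  | cons a u ih =>
    have ha : 0 < a := hu a (Multiset.mem_cons_self _ _)
    have := ih (fun x hx => hu x (Multiset.mem_cons_of_mem hx))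
    simp only [Multiset.sum_cons, Multiset.card_cons]
    omega

lemma part_bound {j : ℕ} (p : Nat.Partition j) :
    p.parts.sup + Multiset.card p.parts ≤ j + 1 := by
  rcases eq_or_ne p.parts 0 with h0 | h0
  · rw [h0]; simp
  · have hpos : ∀ x ∈ p.parts, 0 < x := fun x hx => p.parts_pos hx
    have hmem : p.parts.sup ∈ p.parts := msup_mem h0
    have hcons : p.parts.sup ::ₘ p.parts.erase p.parts.sup = p.parts :=
      Multiset.cons_erase hmem
    have hsum : p.parts.sup + (p.parts.erase p.parts.sup).sum = j := by
      have h1 := congrArg Multiset.sum hcons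
      rw [Multiset.sum_cons, p.parts_sum] at h1
      exact h1
    have hcard : Multiset.card (p.parts.erase p.parts.sup) + 1 = Multiset.card p.parts := by
      have h1 := congrArg Multiset.card hcons
      rw [Multiset.card_cons] at h1
      exact h1
    have : Multiset.card (p.parts.erase p.parts.sup) ≤ (p.parts.erase p.parts.sup).sum :=
      mcard_le_sum (fun x hx => hpos x (Multiset.mem_of_mem_erase hx))
    omega

lemma part_ne {j : ℕ} (hj : 0 < j) (p : Nat.Partition j) : p.parts ≠ 0 := by
  intro h0
  have := p.parts_sum
  rw [h0] at this
  simp at this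
  omega

lemma part_two_le {j : ℕ} (hj : 0 < j) (p : Nat.Partition j) :
    2 ≤ p.parts.sup + Multiset.card p.parts := by
  have h0 := part_ne hj p
  obtain ⟨x, hx⟩ := Multiset.exists_mem_of_ne_zero h0
  have h1 : 1 ≤ p.parts.sup := le_trans (p.parts_pos hx) (Multiset.le_sup hx)
  have h2 : 1 ≤ Multiset.card p.parts := Multiset.card_pos.2 h0
  omega

lemma Nsplit (m j : ℕ) (hm : 1 ≤ m) :
    Nat.card {p : Nat.Partition j // p.parts.sup + Multiset.card p.parts ≤ m}
      = Nat.card {p : Nat.Partition j // p.parts.sup + Multiset.card p.parts ≤ m - 1}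
        + Nat.card {p : Nat.Partition j // p.parts.sup + Multiset.card p.parts = m} := by
  have e : ∀ p : Nat.Partition j,
      p.parts.sup + Multiset.card p.parts ≤ m
        ↔ (p.parts.sup + Multiset.card p.parts ≤ m - 1
            ∨ p.parts.sup + Multiset.card p.parts = m) := by
    intro p
    omega
  rw [Nat.card_congr (Equiv.subtypeEquivRight e), Nat.card_eq_fintype_card,
    Nat.card_eq_fintype_card, Nat.card_eq_fintype_card]
  apply Fintype.card_subtype_or_disjoint
  intro r h1 h2 p hp
  have := h1 p hp
  have := h2 p hp
  simp only at this ⊢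
  omega

lemma Nkey (m n : ℕ) (hm : 2 ≤ m) :
    Nat.card {p : Nat.Partition (n + (m - 1)) // p.parts.sup + Multiset.card p.parts = m}
      = ∑ h ∈ Finset.range (m - 1),
          Nat.card {q : Nat.Partition n // q.parts.sup + Multiset.card q.parts ≤ h} := by
  rw [Nat.card_congr (myEquiv m n hm), Nat.card_eq_fintype_card, Fintype.card_sigma,
    ← Fin.sum_univ_eq_sum_range
      (fun h => Nat.card {q : Nat.Partition n // q.parts.sup + Multiset.card q.parts ≤ h})]
  exact Finset.sum_congr rfl (fun h _ => (Nat.card_eq_fintype_card).symm)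

/-- For every `m ≥ 1`, the area generating polynomial `D_m(q)` of extended Ferrers
diagrams of half-perimeter `m` (partitions `λ` with `λ₁ + ℓ(λ) ≤ m`, counted by size)
satisfies `D_m(q) = D_{m−1}(q) + q^{m−1}·Σ_{h=0}^{m−2} D_h(q)`, with `D₀ = D₁ = 1`. -/
theorem stmt4
    (D : ℕ → Polynomial ℤ)
    (hD : ∀ m j : ℕ, (D m).coeff j =
      (Nat.card {p : Nat.Partition j // p.parts.sup + Multiset.card p.parts ≤ m} : ℤ)) :
    D 0 = 1 ∧ D 1 = 1 ∧
    ∀ m : ℕ, 1 ≤ m →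
      D m = D (m - 1) + Polynomial.X ^ (m - 1) * ∑ h ∈ Finset.range (m - 1), D h := by
  have hone : ∀ m : ℕ, m ≤ 1 → D m = 1 := by
    intro m hm1
    apply Polynomial.ext
    intro j
    rw [hD, Polynomial.coeff_one]
    rcases Nat.eq_zero_or_pos j with rfl | hj
    · simp only [if_pos rfl]
      have hu : ∀ p : Nat.Partition 0, p.parts = 0 := by
        intro p
        have hs := p.parts_sum
        rw [Multiset.eq_zero_iff_forall_notMem]
        intro x hx
        have h1 := p.parts_pos hx
        have h2 := Multiset.single_le_sum (fun y _ => Nat.zero_le y) x hx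
        omega
      haveI : Unique {p : Nat.Partition 0 //
          p.parts.sup + Multiset.card p.parts ≤ m} := by
        refine ⟨⟨⟨⟨0, by simp, by simp⟩, by simp⟩⟩, ?_⟩
        rintro ⟨p, hp⟩
        apply Subtype.ext
        apply Nat.Partition.ext
        simp [hu p]
      rw [Nat.card_unique]
      norm_num
    · rw [if_neg (by omega)]
      haveI : IsEmpty {p : Nat.Partition j //
          p.parts.sup + Multiset.card p.parts ≤ m} := by
        refine ⟨?_⟩
        rintro ⟨p, hp⟩
        have := part_two_le hj p
        omega
      rw [Nat.card_of_isEmpty]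
      norm_num
  refine ⟨hone 0 (by norm_num), hone 1 le_rfl, ?_⟩
  intro m hm
  apply Polynomial.ext
  intro j
  rw [Polynomial.coeff_add, hD, hD, mul_comm, Polynomial.coeff_mul_X_pow',
    Polynomial.finset_sum_coeff]
  rcases Nat.lt_or_ge j (m - 1) with hj | hj
  · rw [if_neg (by omega), add_zero]
    have e : ∀ p : Nat.Partition j,
        p.parts.sup + Multiset.card p.parts ≤ m
          ↔ p.parts.sup + Multiset.card p.parts ≤ m - 1 := by
      intro p
      have := part_bound p
      omega
    rw [Nat.card_congr (Equiv.subtypeEquivRight e)]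
  · rw [if_pos hj]
    have hcast : ∀ k : ℕ, ((∑ h ∈ Finset.range k, (D h).coeff (j - (m - 1)))
        = (∑ h ∈ Finset.range k, (Nat.card {q : Nat.Partition (j - (m - 1)) //
            q.parts.sup + Multiset.card q.parts ≤ h} : ℤ))) := by
      intro k
      exact Finset.sum_congr rfl (fun h _ => hD h (j - (m - 1)))
    rw [hcast]
    rcases eq_or_lt_of_le hm with rfl | hm2
    · simp only [Nat.sub_self, Finset.range_zero, Finset.sum_empty, add_zero]
      have e : ∀ p : Nat.Partition j,
          p.parts.sup + Multiset.card p.parts ≤ 1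
            ↔ p.parts.sup + Multiset.card p.parts ≤ 1 - 1 := by
        intro p
        rcases Nat.eq_zero_or_pos j with rfl | hjp
        · constructor
          · intro _
            have hu : p.parts = 0 := by
              rw [Multiset.eq_zero_iff_forall_notMem]
              intro x hx
              have h1 := p.parts_pos hx
              have h2 := Multiset.single_le_sum (fun y _ => Nat.zero_le y) x hx
              have := p.parts_sum
              omega
            simp [hu]
          · intro h
            omega
        · have := part_two_le hjp p
          omega
      rw [Nat.card_congr (Equiv.subtypeEquivRight e)]
    · have hm2' : 2 ≤ m := hm2
      have hj' : j = (j - (m - 1)) + (m - 1) := by omega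
      rw [Nsplit m j (by omega)]
      push_cast
      congr 1
      rw [show ({p : Nat.Partition j // p.parts.sup + Multiset.card p.parts = m})
        = ({p : Nat.Partition ((j - (m - 1)) + (m - 1)) //
            p.parts.sup + Multiset.card p.parts = m}) from by rw [← hj']]
      rw [Nkey m (j - (m - 1)) hm2']
      push_cast
      rfl
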